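/- Let G be a finite group and C a union of conjugacy classes that is power-closed. Then every eigenvalue of Cay(G,C) is an integer. -/

import Mathlib

open Matrix Finset LinearMap Subgroup

/-- A subset `C` of a group is power-closed. -/
def IsPowerClosed {G : Type*} [Group G] (C : Finset G) : Prop :=
  ∀ x ∈ C, ∀ y : G, y ∈ Subgroup.zpowers x → Subgroup.zpowers y = Subgroup.zpowers x → y ∈ C

/-- The adjacency matrix of the Cayley digraph `Cay(G, C)`. -/
def cayleyAdj {G : Type*} [Group G] [Fintype G] [DecidableEq G] (C : Finset G) :
    Matrix G G ℂ := fun g h => if g * h⁻¹ ∈ C then 1 else 0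

section Aux
open ArithmeticFunction

open Matrix Finset

variable {G : Type*} [Group G] [Fintype G] [DecidableEq G]

/-- Permutation matrix of left translation by `x`. -/
def transMat (x : G) : Matrix G G ℂ := fun g h => if g * h⁻¹ = x then 1 else 0

lemma transMat_mul (x y : G) : transMat x * transMat (y : G) = transMat (x * y) := by
  ext g h
  rw [Matrix.mul_apply]
  have key : ∀ k : G, (transMat x g k) * (transMat y k h)
      = if k = x⁻¹ * g then (if g * h⁻¹ = x * y then (1:ℂ) else 0) else 0 := by
    intro k
    simp only [transMat]
    rcases eq_or_ne k (x⁻¹ * g) with rfl | hk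
    · have h1 : g * (x⁻¹ * g)⁻¹ = x := by group
      rw [if_pos h1]
      have h2 : (x⁻¹ * g) * h⁻¹ = y ↔ g * h⁻¹ = x * y := by
        constructor <;> intro hh
        · rw [← hh]; group
        · have : g * h⁻¹ = x * y := hh
          calc x⁻¹ * g * h⁻¹ = x⁻¹ * (g * h⁻¹) := by group
          _ = x⁻¹ * (x * y) := by rw [this]
          _ = y := by group
      simp only [if_pos rfl, one_mul]
      by_cases hc : g * h⁻¹ = x * y
      · rw [if_pos (h2.mpr hc), if_pos hc]; simp
      · rw [if_neg (fun hz => hc (h2.mp hz)), if_neg hc]; simp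
    · have h1 : ¬ (g * k⁻¹ = x) := by
        intro hh; apply hk; rw [← hh]; group
      rw [if_neg h1, if_neg hk, zero_mul]
  rw [Finset.sum_congr rfl (fun k _ => key k), Finset.sum_ite_eq' Finset.univ]
  simp only [Finset.mem_univ, if_pos]
  rfl

omit [Fintype G] in
lemma transMat_one : transMat (1 : G) = 1 := by
  ext g h
  simp only [transMat, Matrix.one_apply, mul_inv_eq_one]

lemma transMat_pow (x : G) (m : ℕ) : (transMat x) ^ m = transMat (x ^ m) := by
  induction m with
  | zero => simp [transMat_one]
  | succ n ih => rw [pow_succ, pow_succ, ih, transMat_mul]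

lemma sum_mulVec_distrib {ι : Type*} (s : Finset ι) (f : ι → Matrix G G ℂ) (w : G → ℂ) :
    (∑ i ∈ s, f i) *ᵥ w = ∑ i ∈ s, f i *ᵥ w := by
  classical
  induction s using Finset.induction_on with
  | empty => simp [Matrix.zero_mulVec]
  | insert a s ha ih => rw [Finset.sum_insert ha, Finset.sum_insert ha, Matrix.add_mulVec, ih]

omit [Fintype G] in
lemma cayleyAdj_eq_sum (C : Finset G) :
    (fun g h => if g * h⁻¹ ∈ C then (1:ℂ) else 0 : Matrix G G ℂ) = ∑ x ∈ C, transMat x := by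
  ext g h
  rw [Matrix.sum_apply]
  simp only [transMat]
  rw [Finset.sum_ite_eq C (g * h⁻¹) (fun _ => (1:ℂ))]


open Finset LinearMap

variable {V : Type*} [AddCommGroup V] [Module ℂ V] [FiniteDimensional ℂ V]

lemma trace_sum_pow_root_unity (E : Module.End ℂ V) (e : ℕ) (he : 0 < e) (hE : E ^ e = 1) :
    ∃ z : ℕ, LinearMap.trace ℂ V (∑ j ∈ Finset.range e, E ^ j) = (e : ℂ) * z := by
  set Q : Module.End ℂ V := ∑ j ∈ Finset.range e, E ^ j with hQ
  have hshift : ∑ j ∈ Finset.range e, E ^ (j + 1) = Q := by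
    have h1 : ∑ j ∈ Finset.range (e + 1), E ^ j = (∑ j ∈ Finset.range e, E ^ (j+1)) + E ^ 0 :=
      Finset.sum_range_succ' (fun j => E ^ j) e
    have h2 : ∑ j ∈ Finset.range (e + 1), E ^ j = Q + E ^ e :=
      Finset.sum_range_succ (fun j => E ^ j) e
    rw [h1, hE] at h2
    exact (by simpa using h2.symm : Q = _).symm
  have hQE : Q * E = Q := by
    rw [hQ, Finset.sum_mul]
    simpa only [← pow_succ] using hshift
  have hQpow : ∀ j : ℕ, Q * E ^ j = Q := by
    intro j
    induction j with
    | zero => simp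
    | succ n ih => rw [pow_succ, ← mul_assoc, ih, hQE]
  have hQQ : Q * Q = (e : ℂ) • Q := by
    calc Q * Q = ∑ j ∈ Finset.range e, Q * E ^ j := by rw [hQ, Finset.mul_sum]
    _ = ∑ _j ∈ Finset.range e, Q := Finset.sum_congr rfl (fun j _ => hQpow j)
    _ = (e : ℂ) • Q := by rw [Finset.sum_const, Finset.card_range, Nat.cast_smul_eq_nsmul ℂ]
  have hene : (e : ℂ) ≠ 0 := Nat.cast_ne_zero.mpr he.ne'
  set P : Module.End ℂ V := (e : ℂ)⁻¹ • Q with hP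
  have hPP : P ∘ₗ P = P := by
    have : P * P = P := by
      rw [hP, smul_mul_assoc, mul_smul_comm, hQQ, smul_smul, smul_smul]
      congr 1
      field_simp
    exact this
  obtain ⟨p, hproj⟩ := (LinearMap.isProj_iff_isIdempotentElem P).mpr hPP
  refine ⟨Module.finrank ℂ p, ?_⟩
  have htr : LinearMap.trace ℂ V P = (Module.finrank ℂ p : ℂ) := hproj.trace
  have : LinearMap.trace ℂ V Q = (e : ℂ) * LinearMap.trace ℂ V P := by
    have hQP : Q = (e : ℂ) • P := by
      rw [hP, smul_smul, mul_inv_cancel₀ hene, one_smul]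
    rw [hQP, _root_.map_smul, smul_eq_mul]
  rw [this, htr]


open Finset LinearMap ArithmeticFunction

lemma exists_int_sum {α : Type*} (s : Finset α) (f : α → ℂ)
    (h : ∀ i ∈ s, ∃ z : ℤ, f i = (z : ℂ)) : ∃ z : ℤ, ∑ i ∈ s, f i = (z : ℂ) := by
  choose g hg using h
  refine ⟨∑ i ∈ s.attach, g i i.2, ?_⟩
  rw [← Finset.sum_attach s f]
  push_cast
  exact Finset.sum_congr rfl (fun i _ => hg i i.2)

lemma sum_divisors_moebius_eq (n : ℕ) :
    ∑ d ∈ n.divisors, (ArithmeticFunction.moebius d : ℤ) = if n = 1 then 1 else 0 := by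
  have h := ArithmeticFunction.moebius_mul_coe_zeta
  have h2 : (ArithmeticFunction.moebius * (ArithmeticFunction.zeta : ArithmeticFunction ℤ)) n
      = (1 : ArithmeticFunction ℤ) n := by rw [h]
  rwa [ArithmeticFunction.coe_mul_zeta_apply, ArithmeticFunction.one_apply] at h2

variable {V : Type*} [AddCommGroup V] [Module ℂ V] [FiniteDimensional ℂ V]



lemma trace_sum_coprime_int (D : Module.End ℂ V) (k : ℕ) (hk : 0 < k) (hD : D ^ k = 1) :
    ∃ z : ℤ, ∑ m ∈ (Finset.range k).filter (fun m => Nat.gcd m k = 1),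
      LinearMap.trace ℂ V (D ^ m) = (z : ℂ) := by
  set T : ℕ → ℂ := fun m => LinearMap.trace ℂ V (D ^ m) with hT
  have step1 : ∑ m ∈ (Finset.range k).filter (fun m => Nat.gcd m k = 1), T m
      = ∑ m ∈ Finset.range k, ∑ d ∈ k.divisors, (if d ∣ m then (moebius d : ℂ) * T m else 0) := by
    rw [Finset.sum_filter]
    refine Finset.sum_congr rfl (fun m _ => ?_)
    have hdiv : (Nat.gcd m k).divisors = k.divisors.filter (· ∣ m) := by
      ext d
      simp only [Nat.mem_divisors, Finset.mem_filter, Nat.dvd_gcd_iff]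
      constructor
      · rintro ⟨⟨h1, h2⟩, -⟩; exact ⟨⟨h2, hk.ne'⟩, h1⟩
      · rintro ⟨⟨h2, -⟩, h1⟩; exact ⟨⟨h1, h2⟩, Nat.gcd_ne_zero_right hk.ne'⟩
    have hmoeb : ((if Nat.gcd m k = 1 then (1:ℂ) else 0))
        = ∑ d ∈ k.divisors, (if d ∣ m then (moebius d : ℂ) else 0) := by
      have := sum_divisors_moebius_eq (Nat.gcd m k)
      rw [hdiv, Finset.sum_filter] at this
      have h2 : ((∑ d ∈ k.divisors, if d ∣ m then (moebius d : ℤ) else 0 : ℤ) : ℂ)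
          = ((if Nat.gcd m k = 1 then (1:ℤ) else 0 : ℤ) : ℂ) := by rw [this]
      push_cast at h2
      rw [← h2]
    calc (if Nat.gcd m k = 1 then T m else 0)
        = (if Nat.gcd m k = 1 then (1:ℂ) else 0) * T m := by
          by_cases h : Nat.gcd m k = 1 <;> simp [h]
      _ = (∑ d ∈ k.divisors, (if d ∣ m then (moebius d : ℂ) else 0)) * T m := by rw [hmoeb]
      _ = ∑ d ∈ k.divisors, (if d ∣ m then (moebius d : ℂ) * T m else 0) := by
          rw [Finset.sum_mul]
          exact Finset.sum_congr rfl (fun d _ => by by_cases h : d ∣ m <;> simp [h])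
  rw [step1, Finset.sum_comm]
  refine exists_int_sum _ _ (fun d hd => ?_)
  obtain ⟨hdk, hk0⟩ := Nat.mem_divisors.mp hd
  have hd0 : 0 < d := Nat.pos_of_dvd_of_pos hdk hk
  have he0 : 0 < k / d := Nat.div_pos (Nat.le_of_dvd hk hdk) hd0
  have hrange : (Finset.range k).filter (fun m => d ∣ m)
      = (Finset.range (k / d)).image (fun j => d * j) := by
    ext m
    simp only [Finset.mem_filter, Finset.mem_range, Finset.mem_image]
    constructor
    · rintro ⟨hmk, j, rfl⟩
      exact ⟨j, by rwa [Nat.lt_div_iff_mul_lt' hdk], rfl⟩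
    · rintro ⟨j, hj, rfl⟩
      rw [Nat.lt_div_iff_mul_lt' hdk] at hj
      exact ⟨hj, Dvd.intro j rfl⟩
  have hinner : ∑ m ∈ Finset.range k, (if d ∣ m then (moebius d : ℂ) * T m else 0)
      = (moebius d : ℂ) * ∑ j ∈ Finset.range (k / d), T (d * j) := by
    rw [← Finset.sum_filter, hrange, Finset.sum_image
      (fun a _ b _ h => Nat.eq_of_mul_eq_mul_left hd0 h), Finset.mul_sum]
  rw [hinner]
  have hpow : ∀ j, T (d * j) = LinearMap.trace ℂ V ((D ^ d) ^ j) := fun j => by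
    rw [hT]; simp only [← pow_mul]
  have hEe : (D ^ d) ^ (k / d) = 1 := by
    rw [← pow_mul, Nat.mul_div_cancel' hdk, hD]
  obtain ⟨z, hz⟩ := trace_sum_pow_root_unity (D ^ d) (k / d) he0 hEe
  refine ⟨moebius d * (k / d : ℕ) * z, ?_⟩
  rw [Finset.sum_congr rfl (fun j _ => hpow j), ← map_sum, hz]
  simp only [Int.cast_mul, Int.cast_natCast]
  ring


open Subgroup Finset

variable {G : Type*} [Group G] [Fintype G] [DecidableEq G]

/-- The packet of generators of `⟨x⟩` is the image of coprime exponents. -/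
lemma packet_eq_image (C : Finset G) (hpc : ∀ x ∈ C, ∀ y : G, y ∈ Subgroup.zpowers x →
      Subgroup.zpowers y = Subgroup.zpowers x → y ∈ C)
    (x0 : G) (hx0 : x0 ∈ C) [DecidablePred fun y => Subgroup.zpowers y = Subgroup.zpowers x0] :
    C.filter (fun y => Subgroup.zpowers y = Subgroup.zpowers x0)
      = ((Finset.range (orderOf x0)).filter (fun m => Nat.gcd m (orderOf x0) = 1)).image
          (fun m => x0 ^ m) := by
  set k := orderOf x0 with hk
  have hk0 : 0 < k := orderOf_pos x0
  ext y
  simp only [Finset.mem_filter, Finset.mem_image, Finset.mem_range]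
  constructor
  · rintro ⟨hyC, hzp⟩
    have hy_mem : y ∈ Subgroup.zpowers x0 := hzp ▸ Subgroup.mem_zpowers y
    have : y ∈ Submonoid.powers x0 :=
      (isOfFinOrder_of_finite x0).mem_powers_iff_mem_zpowers.mpr hy_mem
    obtain ⟨n, rfl⟩ := this
    refine ⟨n % k, ⟨Nat.mod_lt n hk0, ?_⟩, pow_mod_orderOf x0 n⟩
    -- gcd (n % k) k = 1
    have hord : orderOf (x0 ^ n) = k := by
      have h1 : Nat.card (Subgroup.zpowers (x0 ^ n)) = Nat.card (Subgroup.zpowers x0) := by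
        rw [hzp]
      rwa [Nat.card_zpowers, Nat.card_zpowers] at h1
    have h2 : k / Nat.gcd k n = k := by rw [← orderOf_pow, hord]
    have h3 : Nat.gcd k n = 1 := by
      rcases (Nat.div_eq_self.mp h2) with h | h
      · exact absurd h hk0.ne'
      · exact h
    exact (Nat.gcd_rec k n).symm.trans h3
  · rintro ⟨m, ⟨hmk, hgcd⟩, rfl⟩
    have hmem : x0 ^ m ∈ Subgroup.zpowers x0 := Subgroup.npow_mem_zpowers x0 m
    have hgcd' : Nat.gcd k m = 1 := by rw [Nat.gcd_comm]; exact hgcd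
    have hord : orderOf (x0 ^ m) = k := by
      rw [orderOf_pow, ← hk, hgcd', Nat.div_one]
    have hzp : Subgroup.zpowers (x0 ^ m) = Subgroup.zpowers x0 := by
      have hle : Subgroup.zpowers (x0 ^ m) ≤ Subgroup.zpowers x0 :=
        (Subgroup.zpowers_le).mpr hmem
      have hcard : Nat.card (Subgroup.zpowers (x0 ^ m)) = Nat.card (Subgroup.zpowers x0) := by
        rw [Nat.card_zpowers, Nat.card_zpowers, hord]
      exact (Subgroup.eq_of_le_of_card_ge hle hcard.ge)
    exact ⟨hpc x0 hx0 _ hmem hzp, hzp⟩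

end Aux

set_option synthInstance.maxHeartbeats 1000000 in
set_option maxHeartbeats 2000000 in
theorem stmt9 {G : Type*} [Group G] [Fintype G] [DecidableEq G] (C : Finset G)
    (hC : ∀ g ∈ C, ∀ h : G, h * g * h⁻¹ ∈ C)
    (hpc : IsPowerClosed C) :
    ∀ μ ∈ spectrum ℂ (cayleyAdj C), ∃ k : ℤ, μ = (k : ℂ) := by
  classical
  intro μ hμ
  set A : Matrix G G ℂ := cayleyAdj C with hA
  have hAsum : A = ∑ x ∈ C, transMat x := cayleyAdj_eq_sum C
  -- μ is an algebraic integer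
  have hint : IsIntegral ℤ μ := by
    have h0 : Polynomial.aeval A A.charpoly = 0 := Matrix.aeval_self_charpoly A
    have hsub := spectrum.subset_polynomial_aeval A A.charpoly
    have : Polynomial.eval μ A.charpoly ∈ spectrum ℂ (Polynomial.aeval A A.charpoly) :=
      hsub ⟨μ, hμ, rfl⟩
    rw [h0, spectrum.zero_eq] at this
    have hroot : Polynomial.eval μ A.charpoly = 0 := Set.mem_singleton_iff.mp this
    set A0 : Matrix G G ℤ := fun g h => if g * h⁻¹ ∈ C then 1 else 0 with hA0
    have hmap : A0.map (algebraMap ℤ ℂ) = A := by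
      ext g h
      simp only [Matrix.map_apply, hA0, hA, cayleyAdj, apply_ite]
      split_ifs with hc <;> simp [hc, Matrix.map]
    refine ⟨A0.charpoly, A0.charpoly_monic, ?_⟩
    rw [Polynomial.eval₂_eq_eval_map, ← Matrix.charpoly_map A0 (algebraMap ℤ ℂ), hmap, hroot]
  -- eigenvector
  have h1 : ¬ IsUnit (algebraMap ℂ (Matrix G G ℂ) μ - A) := spectrum.mem_iff.mp hμ
  have hdet : (algebraMap ℂ (Matrix G G ℂ) μ - A).det = 0 := by
    by_contra h
    exact h1 ((Matrix.isUnit_iff_isUnit_det _).mpr (isUnit_iff_ne_zero.mpr h))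
  obtain ⟨v, hv0, hv⟩ := (Matrix.exists_mulVec_eq_zero_iff).mpr hdet
  have hAv : A *ᵥ v = μ • v := by
    have h2 : (algebraMap ℂ (Matrix G G ℂ) μ) *ᵥ v - A *ᵥ v = 0 := by
      rw [← Matrix.sub_mulVec, hv]
    have h3 : (algebraMap ℂ (Matrix G G ℂ) μ) *ᵥ v = μ • v := by
      rw [Algebra.algebraMap_eq_smul_one, Matrix.smul_mulVec, Matrix.one_mulVec]
    rw [sub_eq_zero] at h2
    rw [← h2, h3]
  -- the eigenspace as submodule
  set N : Submodule ℂ (G → ℂ) := Module.End.eigenspace A.mulVecLin μ with hN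
  have hvN : v ∈ N := by
    rw [hN, Module.End.mem_eigenspace_iff, Matrix.mulVecLin_apply, hAv]
  -- commutation
  have hcomm : ∀ x : G, A * transMat x = transMat x * A := by
    intro x
    rw [hAsum, Finset.sum_mul, Finset.mul_sum]
    have lhs : ∀ c ∈ C, transMat c * transMat x = transMat (c * x) := fun c _ => transMat_mul c x
    have rhs : ∀ c ∈ C, transMat x * transMat c = transMat (x * c) := fun c _ => transMat_mul x c
    rw [Finset.sum_congr rfl lhs, Finset.sum_congr rfl rhs]
    refine Finset.sum_nbij' (fun c => x⁻¹ * c * x) (fun c => x * c * x⁻¹) ?_ ?_ ?_ ?_ ?_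
    · intro c hc
      have := hC c hc x⁻¹
      simpa using this
    · intro c hc
      exact hC c hc x
    · intro c _; group
    · intro c _; group
    · intro c _
      congr 1
      group
  -- invariance of N
  have hinvN : ∀ x : G, ∀ w ∈ N, (transMat x) *ᵥ w ∈ N := by
    intro x w hw
    rw [hN, Module.End.mem_eigenspace_iff, Matrix.mulVecLin_apply] at hw ⊢
    rw [Matrix.mulVec_mulVec, hcomm x, ← Matrix.mulVec_mulVec, hw, Matrix.mulVec_smul]
  -- restricted operators
  set ρ : G → Module.End ℂ N := fun x => LinearMap.restrict (transMat x).mulVecLin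
    (fun w hw => hinvN x w hw) with hρ
  have hρ_apply : ∀ x : G, ∀ w : N, ((ρ x w : G → ℂ)) = transMat x *ᵥ (w : G → ℂ) := by
    intro x w; rfl
  have hρmul : ∀ x y : G, ρ x * ρ y = ρ (x * y) := by
    intro x y
    apply LinearMap.ext
    intro w
    apply Subtype.ext
    show transMat x *ᵥ (transMat y *ᵥ (w : G → ℂ)) = transMat (x * y) *ᵥ (w : G → ℂ)
    rw [Matrix.mulVec_mulVec, transMat_mul]
  have hρone : ρ 1 = 1 := by
    apply LinearMap.ext
    intro w
    apply Subtype.ext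
    show transMat (1 : G) *ᵥ (w : G → ℂ) = (w : G → ℂ)
    rw [transMat_one, Matrix.one_mulVec]
  have hρpow : ∀ x : G, ∀ m : ℕ, (ρ x) ^ m = ρ (x ^ m) := by
    intro x m
    induction m with
    | zero => simpa using hρone.symm
    | succ n ih => rw [pow_succ, pow_succ, ih, hρmul]
  -- main trace identity
  have hfin : FiniteDimensional ℂ (G → ℂ) := inferInstance
  have key : μ * (Module.finrank ℂ N : ℂ) = ∑ x ∈ C, LinearMap.trace ℂ N (ρ x) := by
    have hsum_eq : (∑ x ∈ C, ρ x) = μ • (1 : Module.End ℂ N) := by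
      apply LinearMap.ext
      intro w
      apply Subtype.ext
      have hwN : A *ᵥ (w : G → ℂ) = μ • (w : G → ℂ) := by
        have h := Module.End.mem_eigenspace_iff.mp w.2
        rwa [Matrix.mulVecLin_apply] at h
      calc ((∑ x ∈ C, ρ x) w : G → ℂ)
          = ∑ x ∈ C, ((ρ x w : G → ℂ)) := by
            rw [LinearMap.sum_apply]
            exact Submodule.coe_sum _ _ _
        _ = ∑ x ∈ C, transMat x *ᵥ (w : G → ℂ) := by
            exact Finset.sum_congr rfl (fun x _ => hρ_apply x w)
        _ = (∑ x ∈ C, transMat x) *ᵥ (w : G → ℂ) := by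
            rw [sum_mulVec_distrib]
        _ = μ • (w : G → ℂ) := by rw [← hAsum, hwN]
        _ = ((μ • (1 : Module.End ℂ N)) w : G → ℂ) := rfl
    have := congrArg (LinearMap.trace ℂ N) hsum_eq
    rw [map_sum, _root_.map_smul] at this
    rw [LinearMap.trace_one] at this
    rw [this, smul_eq_mul]
  -- integer value of the sum by packets
  have hsum_int : ∃ z : ℤ, ∑ x ∈ C, LinearMap.trace ℂ N (ρ x) = (z : ℂ) := by
    rw [← Finset.sum_fiberwise_of_maps_to
      (g := fun x : G => Subgroup.zpowers x) (t := C.image (fun x => Subgroup.zpowers x))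
      (fun x hx => Finset.mem_image_of_mem _ hx) (fun x => LinearMap.trace ℂ N (ρ x))]
    refine exists_int_sum _ _ (fun H hH => ?_)
    obtain ⟨x0, hx0C, rfl⟩ := Finset.mem_image.mp hH
    rw [packet_eq_image C hpc x0 hx0C]
    rw [Finset.sum_image (fun a ha b hb hab => by
      refine pow_injOn_Iio_orderOf ?_ ?_ hab
      · exact (Finset.mem_range.mp (Finset.mem_filter.mp ha).1)
      · exact (Finset.mem_range.mp (Finset.mem_filter.mp hb).1))]
    have horder : 0 < orderOf x0 := orderOf_pos x0
    have hpow1 : (ρ x0) ^ (orderOf x0) = 1 := by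
      rw [hρpow, pow_orderOf_eq_one, hρone]
    obtain ⟨z, hz⟩ := trace_sum_coprime_int (ρ x0) (orderOf x0) horder hpow1
    refine ⟨z, ?_⟩
    rw [← hz]
    refine Finset.sum_congr rfl (fun m _ => ?_)
    rw [hρpow]
  obtain ⟨z, hz⟩ := hsum_int
  -- finrank positive
  have hn0 : 0 < Module.finrank ℂ N := by
    have : Nontrivial N := ⟨⟨⟨v, hvN⟩, 0, by simp [Subtype.ext_iff, hv0]⟩⟩
    exact Module.finrank_pos
  -- μ = z / n rational
  set n : ℕ := Module.finrank ℂ N with hn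
  have hμq : μ = ((z : ℚ) / (n : ℚ) : ℚ) := by
    have h2 : μ * (n : ℂ) = (z : ℂ) := by rw [key, hz]
    have hne : (n : ℂ) ≠ 0 := Nat.cast_ne_zero.mpr hn0.ne'
    field_simp
    push_cast
    rw [mul_comm] at h2
    rw [← h2]; field_simp
  -- rational + integral over ℤ ⇒ integer
  have hq_int : IsIntegral ℤ ((z : ℚ) / (n : ℚ)) := by
    have : IsIntegral ℤ (algebraMap ℚ ℂ ((z : ℚ) / (n : ℚ))) := by
      have : (algebraMap ℚ ℂ ((z : ℚ) / (n : ℚ))) = μ := by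
        rw [hμq]; simp
      rw [this]; exact hint
    exact (isIntegral_algebraMap_iff (algebraMap ℚ ℂ).injective).mp this
  obtain ⟨y, hy⟩ := IsIntegrallyClosed.isIntegral_iff.mp hq_int
  refine ⟨y, ?_⟩
  rw [hμq, ← hy]
  simp
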